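/- arXiv:2103.11674 — 2 statements merged into one kernel-verified Lean document; each statement's English description precedes it below -/
import Mathlib

section
/- The association probability to the THz tier equals A_T = ∫_0^{R_T} f_{x_T}(x) exp(−πλ_m (ε x^{α_T} e^{k x})^{2/α_m}) dx, where f_{x_T}(x) = 2πλ_T x e^{−πλ_T x²}/(1 − e^{−πλ_T R_T²}), assuming the nearest MBS distance x_m satisfies P(x_m ≥ ρ) = e^{−πλ_m ρ²} and is independent of x_T. -/
open MeasureTheory ProbabilityTheory Real Set

/-- Association probability to the THz tier: if the (conditioned) nearest-TBS distance
`XT` has density `f_{x_T}(x) = 2π λ_T x e^{−π λ_T x²} / (1 − e^{−π λ_T R_T²})` on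
`(0, R_T)`, the nearest-MBS distance `Xm` satisfies `P(Xm ≥ ρ) = e^{−π λ_m ρ²}` and is
independent of `XT`, then the probability that the user associates with the THz tier
(i.e. that `Xm` exceeds `(ε x^{α_T} e^{k x})^{1/α_m}` at `x = XT`) equals
`∫_0^{R_T} f_{x_T}(x) exp(−π λ_m (ε x^{α_T} e^{k x})^{2/α_m}) dx`. -/
theorem stmt10 (lamT lamm RT ε k αT αm : ℝ)
    (hlamT : 0 < lamT) (hlamm : 0 < lamm) (hRT : 0 < RT) (hε : 0 < ε)
    (hk : 0 < k) (hαT : 0 < αT) (hαm : 0 < αm)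
    (Ω : Type*) [MeasureSpace Ω] [IsProbabilityMeasure (ℙ : Measure Ω)]
    (XT Xm : Ω → ℝ) (hXT : Measurable XT) (hXm : Measurable Xm)
    (hindep : IndepFun XT Xm)
    (hXTlaw : Measure.map XT ℙ = (volume : Measure ℝ).withDensity
      (Set.indicator (Set.Ioo 0 RT) (fun x =>
        ENNReal.ofReal (2 * π * lamT * x * Real.exp (-(π * lamT * x ^ 2)) /
          (1 - Real.exp (-(π * lamT * RT ^ 2)))))))
    (hXmtail : ∀ ρ : ℝ, 0 ≤ ρ → ℙ {ω | ρ ≤ Xm ω} = ENNReal.ofReal (Real.exp (-(π * lamm * ρ ^ 2)))) :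
    (ℙ {ω | (ε * XT ω ^ αT * Real.exp (k * XT ω)) ^ (1 / αm) < Xm ω}).toReal =
      ∫ x in Set.Ioo 0 RT,
        (2 * π * lamT * x * Real.exp (-(π * lamT * x ^ 2)) /
          (1 - Real.exp (-(π * lamT * RT ^ 2)))) *
        Real.exp (-(π * lamm * (ε * x ^ αT * Real.exp (k * x)) ^ (2 / αm))) := by
  set f : ℝ → ℝ := fun x => 2 * π * lamT * x * Real.exp (-(π * lamT * x ^ 2)) /
      (1 - Real.exp (-(π * lamT * RT ^ 2))) with hfdef
  set g : ℝ → ℝ := fun x => (ε * x ^ αT * Real.exp (k * x)) ^ (1 / αm) with hgdef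
  have hbcont : Continuous fun x : ℝ => ε * x ^ αT * Real.exp (k * x) :=
    (continuous_const.mul (Real.continuous_rpow_const hαT.le)).mul
      (Real.continuous_exp.comp (continuous_const.mul continuous_id))
  have hgcont : Continuous g := hbcont.rpow_const fun x => Or.inr (by positivity)
  have hgmeas : Measurable g := hgcont.measurable
  set ν : Measure ℝ := Measure.map Xm ℙ with hνdef
  haveI : IsProbabilityMeasure ν := Measure.isProbabilityMeasure_map hXm.aemeasurable
  -- tail of ν on Ici
  have hνIci : ∀ ρ : ℝ, 0 ≤ ρ → ν (Set.Ici ρ) = ENNReal.ofReal (Real.exp (-(π * lamm * ρ ^ 2))) := by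
    intro ρ hρ
    rw [hνdef, Measure.map_apply hXm measurableSet_Ici]
    exact hXmtail ρ hρ
  -- tail of ν on Ioi
  have hνIoi : ∀ ρ : ℝ, 0 ≤ ρ → ν (Set.Ioi ρ) = ENNReal.ofReal (Real.exp (-(π * lamm * ρ ^ 2))) := by
    intro ρ hρ
    have hmono : Monotone (fun n : ℕ => Set.Ici (ρ + 1 / (n + 1))) := by
      intro n m hnm
      apply Set.Ici_subset_Ici.2
      gcongr
    have hU : (⋃ n : ℕ, Set.Ici (ρ + 1 / ((n : ℝ) + 1))) = Set.Ioi ρ := by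
      ext y
      simp only [Set.mem_iUnion, Set.mem_Ici, Set.mem_Ioi]
      constructor
      · rintro ⟨n, hn⟩
        have : (0 : ℝ) < 1 / ((n : ℝ) + 1) := by positivity
        linarith
      · intro hy
        obtain ⟨n, hn⟩ := exists_nat_one_div_lt (show (0:ℝ) < y - ρ by linarith)
        exact ⟨n, by linarith⟩
    have h1 := MeasureTheory.tendsto_measure_iUnion_atTop (μ := ν) hmono
    rw [hU] at h1
    have h2 : Filter.Tendsto (fun n : ℕ => ν (Set.Ici (ρ + 1 / ((n : ℝ) + 1))))
        Filter.atTop (nhds (ENNReal.ofReal (Real.exp (-(π * lamm * ρ ^ 2))))) := by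
      have heq : ∀ n : ℕ, ν (Set.Ici (ρ + 1 / ((n : ℝ) + 1))) =
          ENNReal.ofReal (Real.exp (-(π * lamm * (ρ + 1 / ((n : ℝ) + 1)) ^ 2))) := by
        intro n
        exact hνIci _ (by positivity)
      simp_rw [heq]
      have h0 : Filter.Tendsto (fun n : ℕ => ρ + 1 / ((n : ℝ) + 1)) Filter.atTop (nhds ρ) := by
        have := tendsto_one_div_add_atTop_nhds_zero_nat (𝕜 := ℝ)
        have := (tendsto_const_nhds (x := ρ) (f := Filter.atTop (α := ℕ))).add this
        simpa using this
      have hcont : Continuous fun t : ℝ => ENNReal.ofReal (Real.exp (-(π * lamm * t ^ 2))) :=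
        ENNReal.continuous_ofReal.comp (by continuity)
      exact (hcont.tendsto ρ).comp h0
    exact tendsto_nhds_unique h1 h2
  -- joint law
  have hmap : Measure.map (fun ω => (XT ω, Xm ω)) ℙ = (Measure.map XT ℙ).prod ν :=
    (ProbabilityTheory.indepFun_iff_map_prod_eq_prod_map_map hXT.aemeasurable
      hXm.aemeasurable).1 hindep
  have hE : MeasurableSet {p : ℝ × ℝ | g p.1 < p.2} :=
    measurableSet_lt (hgmeas.comp measurable_fst) measurable_snd
  have key : ℙ {ω | (ε * XT ω ^ αT * Real.exp (k * XT ω)) ^ (1 / αm) < Xm ω} =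
      ∫⁻ x, ν (Set.Ioi (g x)) ∂(Measure.map XT ℙ) := by
    have hset : {ω | (ε * XT ω ^ αT * Real.exp (k * XT ω)) ^ (1 / αm) < Xm ω} =
        (fun ω => (XT ω, Xm ω)) ⁻¹' {p : ℝ × ℝ | g p.1 < p.2} := rfl
    rw [hset, ← Measure.map_apply (hXT.prodMk hXm) hE, hmap, Measure.prod_apply hE]
    rfl
  rw [key, hXTlaw]
  have hνm : Measurable fun x : ℝ => ν (Set.Ioi (g x)) := measurable_measure_prodMk_left hE
  rw [MeasureTheory.lintegral_withDensity_eq_lintegral_mul _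
    (Measurable.indicator (by fun_prop) measurableSet_Ioo) hνm]
  have hindic : ∀ x : ℝ,
      ((Set.indicator (Set.Ioo 0 RT) fun x => ENNReal.ofReal (f x)) * fun x => ν (Set.Ioi (g x))) x
      = Set.indicator (Set.Ioo 0 RT)
          (fun x => ENNReal.ofReal (f x * Real.exp
            (-(π * lamm * (ε * x ^ αT * Real.exp (k * x)) ^ (2 / αm))))) x := by
    intro x
    simp only [Pi.mul_apply]
    by_cases hx : x ∈ Set.Ioo 0 RT
    · rw [Set.indicator_of_mem hx, Set.indicator_of_mem hx]
      have hb : 0 < ε * x ^ αT * Real.exp (k * x) :=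
        mul_pos (mul_pos hε (Real.rpow_pos_of_pos hx.1 αT)) (Real.exp_pos _)
      have hg0 : 0 ≤ g x := (Real.rpow_pos_of_pos hb _).le
      rw [hνIoi _ hg0]
      have hsq : g x ^ 2 = (ε * x ^ αT * Real.exp (k * x)) ^ (2 / αm) := by
        rw [hgdef]
        rw [← Real.rpow_natCast ((ε * x ^ αT * Real.exp (k * x)) ^ (1 / αm)) 2,
          ← Real.rpow_mul hb.le]
        norm_num
        rw [show αm⁻¹ * 2 = 2 / αm by rw [div_eq_mul_inv]; ring]
      rw [hsq, ← ENNReal.ofReal_mul]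
      · have hfnn : 0 ≤ f x := by
          rw [hfdef]
          apply div_nonneg
          · have := hx.1
            positivity
          · have : Real.exp (-(π * lamT * RT ^ 2)) < 1 := by
              rw [Real.exp_lt_one_iff]
              have : (0:ℝ) < π * lamT * RT ^ 2 := by positivity
              linarith
            linarith
        exact hfnn
    · rw [Set.indicator_of_notMem hx, Set.indicator_of_notMem hx, zero_mul]
  rw [lintegral_congr hindic, lintegral_indicator measurableSet_Ioo _]
  rw [MeasureTheory.integral_eq_lintegral_of_nonneg_ae ?hpos ?hmeas]
  case hpos =>
    filter_upwards [ae_restrict_mem measurableSet_Ioo] with x hx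
    have hfnn : 0 ≤ f x := by
      rw [hfdef]
      apply div_nonneg
      · have := hx.1
        positivity
      · have : Real.exp (-(π * lamT * RT ^ 2)) < 1 := by
          rw [Real.exp_lt_one_iff]
          have : (0:ℝ) < π * lamT * RT ^ 2 := by positivity
          linarith
        linarith
    exact mul_nonneg hfnn (Real.exp_pos _).le
  case hmeas =>
    apply Measurable.aestronglyMeasurable
    apply Measurable.mul
    · fun_prop
    · exact (Real.continuous_exp.comp ((continuous_const.mul
        (hbcont.rpow_const fun x => Or.inr (by positivity))).neg)).measurable
end

section
/- Conditioned on association with the mmWave tier, the serving-distance density is f_{X_m}(x̂) = (1/A_m) f_{x_m}(x̂) e^{−πλ_T ν(x̂)²}, where ν(x̂) = (α_T/k)·W((k/α_T)(x̂^{α_m}/ε)^{1/α_T}) and A_m = 1 − A_T. -/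
open MeasureTheory ProbabilityTheory Real Set

private lemma W_mono_aux (W : ℝ → ℝ)
    (hW' : ∀ u : ℝ, 0 ≤ u → 0 ≤ W u ∧ W u * Real.exp (W u) = u)
    {a b : ℝ} (ha : 0 ≤ a) (hab : a ≤ b) : W a ≤ W b := by
  by_contra h
  push_neg at h
  obtain ⟨hb0, hbe⟩ := hW' b (ha.trans hab)
  obtain ⟨ha0, hae⟩ := hW' a ha
  have hWa : 0 < W a := lt_of_le_of_lt hb0 h
  have h1 : W b * Real.exp (W b) ≤ W a * Real.exp (W b) :=
    mul_le_mul_of_nonneg_right h.le (Real.exp_pos _).le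
  have h2 : W a * Real.exp (W b) < W a * Real.exp (W a) :=
    mul_lt_mul_of_pos_left (Real.exp_lt_exp.2 h) hWa
  have : b < a := by rw [← hbe, ← hae]; linarith
  linarith

private lemma tail_Ici_aux (c : ℝ) (μ : Measure ℝ) [IsProbabilityMeasure μ]
    (htail : ∀ ρ : ℝ, 0 ≤ ρ → μ (Set.Ioi ρ) = ENNReal.ofReal (Real.exp (-(c * ρ ^ 2))))
    {ρ : ℝ} (hρ : 0 < ρ) :
    μ (Set.Ici ρ) = ENNReal.ofReal (Real.exp (-(c * ρ ^ 2))) := by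
  refine le_antisymm ?_ ?_
  · rw [ENNReal.le_ofReal_iff_toReal_le (measure_ne_top μ _) (Real.exp_pos _).le]
    have key : ∀ n : ℕ, (μ (Set.Ici ρ)).toReal ≤ Real.exp (-(c * (ρ - ρ / (n + 1)) ^ 2)) := by
      intro n
      have hδ : 0 < ρ / (n + 1) := by positivity
      have h1 : Set.Ici ρ ⊆ Set.Ioi (ρ - ρ / (n + 1)) := fun t ht => by
        simp only [Set.mem_Ioi]; have := Set.mem_Ici.1 ht; linarith
      have h2 : (0:ℝ) ≤ ρ - ρ / (n + 1) := by
        rw [sub_nonneg, div_le_iff₀ (by positivity)]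
        nlinarith [Nat.cast_nonneg (α := ℝ) n]
      calc (μ (Set.Ici ρ)).toReal ≤ (μ (Set.Ioi (ρ - ρ / (n + 1)))).toReal :=
            ENNReal.toReal_mono (measure_ne_top μ _) (measure_mono h1)
        _ = Real.exp (-(c * (ρ - ρ / (n + 1)) ^ 2)) := by
            rw [htail _ h2, ENNReal.toReal_ofReal (Real.exp_pos _).le]
    have hlim : Filter.Tendsto (fun n : ℕ => Real.exp (-(c * (ρ - ρ / (n + 1)) ^ 2)))
        Filter.atTop (nhds (Real.exp (-(c * ρ ^ 2)))) := by
      have h0 : Filter.Tendsto (fun n : ℕ => ρ - ρ / (n + 1)) Filter.atTop (nhds ρ) := by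
        have := tendsto_one_div_add_atTop_nhds_zero_nat (𝕜 := ℝ)
        have h1 : Filter.Tendsto (fun n : ℕ => ρ * (1 / (n + 1))) Filter.atTop (nhds (ρ * 0)) :=
          this.const_mul ρ
        rw [mul_zero] at h1
        have : (fun n : ℕ => ρ - ρ / (n + 1)) = fun n : ℕ => ρ - ρ * (1 / (n + 1)) := by
          funext n; rw [mul_one_div]
        rw [this]
        simpa using h1.const_sub ρ
      have hc : Continuous fun y : ℝ => Real.exp (-(c * y ^ 2)) := by fun_prop
      exact (hc.tendsto ρ).comp h0
    exact ge_of_tendsto hlim (Filter.Eventually.of_forall key)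
  · rw [← htail ρ hρ.le]
    exact measure_mono Set.Ioi_subset_Ici_self

private lemma lambert_key_aux (ε k αT αm : ℝ) (hε : 0 < ε)
    (hk : 0 < k) (hαT : 0 < αT)
    (W : ℝ → ℝ) (hW' : ∀ u : ℝ, 0 ≤ u → 0 ≤ W u ∧ W u * Real.exp (W u) = u)
    {x : ℝ} (hx : 0 < x) :
    0 < (αT / k) * W ((k / αT) * (x ^ αm / ε) ^ (1 / αT)) ∧
      ε * ((αT / k) * W ((k / αT) * (x ^ αm / ε) ^ (1 / αT))) ^ αT *
        Real.exp (k * ((αT / k) * W ((k / αT) * (x ^ αm / ε) ^ (1 / αT)))) = x ^ αm := by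
  have hxαm : 0 < x ^ αm := Real.rpow_pos_of_pos hx αm
  set u : ℝ := (k / αT) * (x ^ αm / ε) ^ (1 / αT) with hu
  have hupos : 0 < u := by
    have : 0 < (x ^ αm / ε) ^ (1 / αT) := Real.rpow_pos_of_pos (by positivity) _
    positivity
  obtain ⟨hw0, hwe⟩ := hW' u hupos.le
  set w : ℝ := W u with hwdef
  have hwpos : 0 < w := by
    rcases hw0.lt_or_eq with h | h
    · exact h
    · exfalso; rw [← h, zero_mul] at hwe; linarith
  refine ⟨by positivity, ?_⟩
  have hek : Real.exp (k * (αT / k * w)) = Real.exp w ^ αT := by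
    rw [Real.rpow_def_of_pos (Real.exp_pos w), Real.log_exp]
    congr 1
    field_simp
  have h1 : (αT / k * w) ^ αT = (αT / k) ^ αT * w ^ αT :=
    Real.mul_rpow (by positivity) hw0
  have h2 : w ^ αT * Real.exp w ^ αT = (w * Real.exp w) ^ αT :=
    (Real.mul_rpow hw0 (Real.exp_pos w).le).symm
  have h3 : (αT / k) ^ αT * (w * Real.exp w) ^ αT = (αT / k * (w * Real.exp w)) ^ αT :=
    (Real.mul_rpow (by positivity) (by positivity)).symm
  have h4 : αT / k * (w * Real.exp w) = (x ^ αm / ε) ^ (1 / αT) := by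
    rw [hwe, hu]; field_simp
  calc ε * (αT / k * w) ^ αT * Real.exp (k * (αT / k * w))
      = ε * ((αT / k) ^ αT * w ^ αT) * Real.exp w ^ αT := by rw [h1, hek]
    _ = ε * ((αT / k) ^ αT * (w ^ αT * Real.exp w ^ αT)) := by ring
    _ = ε * ((αT / k) ^ αT * (w * Real.exp w) ^ αT) := by rw [h2]
    _ = ε * (αT / k * (w * Real.exp w)) ^ αT := by rw [h3]
    _ = ε * ((x ^ αm / ε) ^ (1 / αT)) ^ αT := by rw [h4]
    _ = ε * (x ^ αm / ε) ^ ((1 / αT) * αT) := by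
        rw [← Real.rpow_mul (by positivity)]
    _ = ε * (x ^ αm / ε) := by rw [one_div_mul_cancel hαT.ne', Real.rpow_one]
    _ = x ^ αm := by field_simp
/-- Conditioned on association with the mmWave tier, the serving-distance density is
`f_{X_m}(xh) = (1/A_m) f_{x_m}(xh) e^{−π λ_T ν(xh)²}`, where
`ν(xh) = (α_T/k) W((k/α_T)(xh^{α_m}/ε)^{1/α_T})`, `W` is the Lambert W function
(the inverse of `w ↦ w e^w` on `[0,∞)`), and `A_m = 1 − A_T` with `A_T` the THz
association probability: the conditional CDF of the serving distance given the
mmWave-association event is the integral of this density. -/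
theorem stmt14 (lamT lamm Rm ε k αT αm : ℝ)
    (hlamT : 0 < lamT) (hlamm : 0 < lamm) (hRm : 0 < Rm) (hε : 0 < ε)
    (hk : 0 < k) (hαT : 0 < αT) (hαm : 0 < αm)
    (W : ℝ → ℝ)
    (hW : ∀ w : ℝ, 0 ≤ w → W (w * Real.exp w) = w)
    (hW' : ∀ u : ℝ, 0 ≤ u → 0 ≤ W u ∧ W u * Real.exp (W u) = u)
    (Ω : Type*) [MeasureSpace Ω] [IsProbabilityMeasure (ℙ : Measure Ω)]
    (XT Xm : Ω → ℝ) (hXT : Measurable XT) (hXm : Measurable Xm)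
    (hindep : IndepFun XT Xm)
    (fxm : ℝ → ℝ)
    (hf : ∀ x, fxm x = 2 * π * lamm * x * Real.exp (-(π * lamm * x ^ 2)) /
      (1 - Real.exp (-(π * lamm * Rm ^ 2))))
    (hXmlaw : Measure.map Xm ℙ = (volume : Measure ℝ).withDensity
      (Set.indicator (Set.Ioo 0 Rm) (fun x => ENNReal.ofReal (fxm x))))
    (hXTtail : ∀ ρ : ℝ, 0 ≤ ρ → ℙ {ω | ρ < XT ω} = ENNReal.ofReal (Real.exp (-(π * lamT * ρ ^ 2))))
    (ν : ℝ → ℝ)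
    (hν : ∀ x, ν x = (αT / k) * W ((k / αT) * (x ^ αm / ε) ^ (1 / αT)))
    (AT Am : ℝ)
    (hAT : AT = (ℙ {ω | (ε * XT ω ^ αT * Real.exp (k * XT ω)) ^ (1 / αm) < Xm ω}).toReal)
    (hAm : Am = 1 - AT) (hAmpos : 0 < Am) :
    ∀ xh ∈ Set.Ioo 0 Rm,
      (ℙ[|{ω | Xm ω ≤ (ε * XT ω ^ αT * Real.exp (k * XT ω)) ^ (1 / αm)}]) {ω | Xm ω ≤ xh} =
        ENNReal.ofReal (∫ x in Set.Ioo 0 xh,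
          (1 / Am) * fxm x * Real.exp (-(π * lamT * ν x ^ 2))) := by
  rintro xh ⟨hxh0, hxhR⟩
  have hπ := Real.pi_pos
  -- the association threshold function
  set g : ℝ → ℝ := fun t => (ε * t ^ αT * Real.exp (k * t)) ^ (1 / αm) with hgdef
  have hgcont : Continuous g := by
    have h1 : Continuous fun t : ℝ => ε * t ^ αT * Real.exp (k * t) :=
      (continuous_const.mul (Real.continuous_rpow_const hαT.le)).mul
        (Real.continuous_exp.comp (continuous_const.mul continuous_id))
    exact (Real.continuous_rpow_const (by positivity)).comp h1
  have hgmeas : Measurable g := hgcont.measurable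
  have hE : MeasurableSet {ω | Xm ω ≤ g (XT ω)} :=
    measurableSet_le hXm (hgmeas.comp hXT)
  -- laws
  set μT : Measure ℝ := Measure.map XT ℙ with hμT
  set μm : Measure ℝ := Measure.map Xm ℙ with hμm
  haveI : IsProbabilityMeasure μT := Measure.isProbabilityMeasure_map hXT.aemeasurable
  haveI : IsProbabilityMeasure μm := Measure.isProbabilityMeasure_map hXm.aemeasurable
  have hTIoi : ∀ ρ : ℝ, 0 ≤ ρ →
      μT (Set.Ioi ρ) = ENNReal.ofReal (Real.exp (-(π * lamT * ρ ^ 2))) := by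
    intro ρ hρ
    rw [hμT, Measure.map_apply hXT measurableSet_Ioi]
    exact hXTtail ρ hρ
  have hTIci : ∀ ρ : ℝ, 0 < ρ →
      μT (Set.Ici ρ) = ENNReal.ofReal (Real.exp (-(π * lamT * ρ ^ 2))) :=
    fun ρ hρ => tail_Ici_aux (π * lamT) μT hTIoi hρ
  have hTneg : μT {t : ℝ | t ≤ 0} = 0 := by
    have h0 : μT (Set.Ioi (0 : ℝ)) = 1 := by
      rw [hTIoi 0 le_rfl]; norm_num
    have hc : {t : ℝ | t ≤ 0} = (Set.Ioi (0 : ℝ))ᶜ := by ext t; simp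
    rw [hc, prob_compl_eq_one_sub measurableSet_Ioi, h0, tsub_self]
  -- ν facts
  have hνfact : ∀ x : ℝ, 0 < x →
      0 < ν x ∧ ε * ν x ^ αT * Real.exp (k * ν x) = x ^ αm := by
    intro x hx
    rw [hν x]
    exact lambert_key_aux ε k αT αm hε hk hαT W hW' hx
  -- g is strictly monotone on [0,∞) and inverse of ν
  have hSM : StrictMonoOn g (Set.Ici (0 : ℝ)) := by
    intro a ha b hb hab
    have ha' : (0:ℝ) ≤ a := ha
    have hb' : (0:ℝ) < b := lt_of_le_of_lt ha' hab
    have h1 : ε * a ^ αT * Real.exp (k * a) < ε * b ^ αT * Real.exp (k * b) := by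
      have haT : a ^ αT ≤ b ^ αT := Real.rpow_le_rpow ha' hab.le hαT.le
      have hbT : 0 < b ^ αT := Real.rpow_pos_of_pos hb' αT
      have hee : Real.exp (k * a) < Real.exp (k * b) :=
        Real.exp_lt_exp.2 (mul_lt_mul_of_pos_left hab hk)
      have step1 : ε * a ^ αT * Real.exp (k * a) ≤ ε * b ^ αT * Real.exp (k * a) :=
        mul_le_mul_of_nonneg_right (mul_le_mul_of_nonneg_left haT hε.le) (Real.exp_pos _).le
      have step2 : ε * b ^ αT * Real.exp (k * a) < ε * b ^ αT * Real.exp (k * b) :=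
        mul_lt_mul_of_pos_left hee (mul_pos hε hbT)
      linarith
    have h0 : 0 ≤ ε * a ^ αT * Real.exp (k * a) :=
      mul_nonneg (mul_nonneg hε.le (Real.rpow_nonneg ha' αT)) (Real.exp_pos _).le
    exact Real.rpow_lt_rpow h0 h1 (by positivity)
  have hgν : ∀ x : ℝ, 0 < x → g (ν x) = x := by
    intro x hx
    obtain ⟨hν1, hν2⟩ := hνfact x hx
    show (ε * ν x ^ αT * Real.exp (k * ν x)) ^ (1 / αm) = x
    rw [hν2, ← Real.rpow_mul hx.le, mul_one_div_cancel hαm.ne', Real.rpow_one]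
  have hiff : ∀ x t : ℝ, 0 < x → 0 < t → (x ≤ g t ↔ ν x ≤ t) := by
    intro x t hx ht
    obtain ⟨hν1, _⟩ := hνfact x hx
    have h0 := hSM.le_iff_le (Set.mem_Ici.2 hν1.le) (Set.mem_Ici.2 ht.le)
    rw [hgν x hx] at h0
    exact h0
  -- section measure
  have hsec : ∀ x : ℝ, 0 < x →
      μT {t : ℝ | x ≤ g t} = ENNReal.ofReal (Real.exp (-(π * lamT * ν x ^ 2))) := by
    intro x hx
    obtain ⟨hν1, _⟩ := hνfact x hx
    have hae : ∀ᵐ t ∂μT, 0 < t := by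
      rw [ae_iff]
      have : {t : ℝ | ¬ 0 < t} = {t : ℝ | t ≤ 0} := by ext t; simp
      rw [this]; exact hTneg
    have hseteq : {t : ℝ | x ≤ g t} =ᵐ[μT] Set.Ici (ν x) := by
      rw [Filter.eventuallyEq_set]
      filter_upwards [hae] with t ht
      simp only [Set.mem_setOf_eq, Set.mem_Ici]
      exact hiff x t hx ht
    rw [measure_congr hseteq, hTIci _ hν1]
  -- probability of the conditioning event
  have hPE : ℙ {ω | Xm ω ≤ g (XT ω)} = ENNReal.ofReal Am := by
    have hc : {ω | Xm ω ≤ g (XT ω)}ᶜ = {ω | g (XT ω) < Xm ω} := by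
      ext ω; simp [not_le]
    have h2 : ℙ {ω | g (XT ω) < Xm ω} = ENNReal.ofReal AT := by
      rw [hAT]
      exact (ENNReal.ofReal_toReal (measure_ne_top ℙ _)).symm
    have h3 := prob_compl_eq_one_sub (μ := ℙ) hE
    rw [hc, h2] at h3
    have h4 : ℙ {ω | Xm ω ≤ g (XT ω)} = 1 - ENNReal.ofReal AT := by
      rw [h3, ENNReal.sub_sub_cancel ENNReal.one_ne_top prob_le_one]
    have hATnn : 0 ≤ AT := hAT ▸ ENNReal.toReal_nonneg
    rw [h4, hAm, ENNReal.ofReal_sub _ hATnn, ENNReal.ofReal_one]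
  -- facts about fxm
  have hD : 0 < 1 - Real.exp (-(π * lamm * Rm ^ 2)) := by
    have h1 : -(π * lamm * Rm ^ 2) < 0 := by
      have : 0 < π * lamm * Rm ^ 2 := by positivity
      linarith
    have := Real.exp_lt_one_iff.mpr h1
    linarith
  have hfnn : ∀ y : ℝ, 0 ≤ y → 0 ≤ fxm y := by
    intro y hy
    rw [hf y]
    exact div_nonneg (by positivity) hD.le
  have hfxm_meas : Measurable fxm := by
    have hfx : fxm = fun x => 2 * π * lamm * x * Real.exp (-(π * lamm * x ^ 2)) /
        (1 - Real.exp (-(π * lamm * Rm ^ 2))) := funext hf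
    rw [hfx]
    fun_prop
  -- rewrite the conditional probability
  rw [show {ω | Xm ω ≤ (ε * XT ω ^ αT * Real.exp (k * XT ω)) ^ (1 / αm)}
      = {ω | Xm ω ≤ g (XT ω)} from rfl, cond_apply hE ℙ, hPE]
  -- joint law
  set S : Set (ℝ × ℝ) := {p : ℝ × ℝ | p.2 ≤ g p.1 ∧ p.2 ≤ xh} with hSdef
  have hS : MeasurableSet S :=
    (measurableSet_le measurable_snd (hgmeas.comp measurable_fst)).inter
      (measurableSet_le measurable_snd measurable_const)
  have hprod : Measure.map (fun ω => (XT ω, Xm ω)) ℙ = μT.prod μm :=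
    (indepFun_iff_map_prod_eq_prod_map_map hXT.aemeasurable hXm.aemeasurable).1 hindep
  have hEB : ℙ ({ω | Xm ω ≤ g (XT ω)} ∩ {ω | Xm ω ≤ xh}) = (μT.prod μm) S := by
    rw [← hprod, Measure.map_apply (hXT.prodMk hXm) hS]
    rfl
  have hfub : (μT.prod μm) S = ∫⁻ x, μT ((fun t => (t, x)) ⁻¹' S) ∂μm :=
    Measure.prod_apply_symm hS
  have hhmeas : Measurable fun x : ℝ => μT ((fun t => (t, x)) ⁻¹' S) :=
    measurable_measure_prodMk_right hS
  have hdmeas : Measurable (Set.indicator (Set.Ioo 0 Rm) fun x => ENNReal.ofReal (fxm x)) :=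
    (ENNReal.measurable_ofReal.comp hfxm_meas).indicator measurableSet_Ioo
  have hwd : ∫⁻ x, μT ((fun t => (t, x)) ⁻¹' S) ∂μm
      = ∫⁻ x, (Set.indicator (Set.Ioo 0 Rm) (fun x => ENNReal.ofReal (fxm x)) *
          fun x : ℝ => μT ((fun t => (t, x)) ⁻¹' S)) x ∂volume := by
    rw [hXmlaw]
    exact lintegral_withDensity_eq_lintegral_mul volume hdmeas hhmeas
  -- a.e. identification of the integrand
  have hsing : ∀ᵐ x : ℝ ∂volume, x ≠ xh := by
    rw [ae_iff]
    have hset : {x : ℝ | ¬ x ≠ xh} = {xh} := by ext y; simp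
    rw [hset, Real.volume_singleton]
  have haeC : (fun x : ℝ => (Set.indicator (Set.Ioo 0 Rm) (fun x => ENNReal.ofReal (fxm x)) *
        fun x : ℝ => μT ((fun t => (t, x)) ⁻¹' S)) x) =ᵐ[volume]
      Set.indicator (Set.Ioo 0 xh)
        (fun x => ENNReal.ofReal (fxm x * Real.exp (-(π * lamT * ν x ^ 2)))) := by
    filter_upwards [hsing] with x hx
    simp only [Pi.mul_apply]
    by_cases hmem : x ∈ Set.Ioo 0 xh
    · obtain ⟨hx0, hxxh⟩ := hmem
      have hmem2 : x ∈ Set.Ioo 0 xh := ⟨hx0, hxxh⟩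
      have hmem' : x ∈ Set.Ioo 0 Rm := ⟨hx0, hxxh.trans hxhR⟩
      have hset : (fun t : ℝ => (t, x)) ⁻¹' S = {t : ℝ | x ≤ g t} := by
        ext t
        simp only [hSdef, Set.mem_preimage, Set.mem_setOf_eq]
        exact ⟨fun h => h.1, fun h => ⟨h, hxxh.le⟩⟩
      rw [Set.indicator_of_mem hmem2, Set.indicator_of_mem hmem', hset, hsec x hx0,
        ← ENNReal.ofReal_mul (hfnn x hx0.le)]
    · rw [Set.indicator_of_notMem hmem]
      by_cases hx0 : 0 < x
      · have h1 : ¬ x < xh := fun hlt => hmem ⟨hx0, hlt⟩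
        have hxgt : xh < x := lt_of_le_of_ne (not_lt.1 h1) (Ne.symm hx)
        have hset : (fun t : ℝ => (t, x)) ⁻¹' S = (∅ : Set ℝ) := by
          ext t
          simp only [hSdef, Set.mem_preimage, Set.mem_setOf_eq, Set.mem_empty_iff_false,
            iff_false, not_and]
          intro _
          exact not_le.2 hxgt
        rw [hset, measure_empty, mul_zero]
      · have hnot : x ∉ Set.Ioo 0 Rm := fun h => hx0 h.1
        rw [Set.indicator_of_notMem hnot, zero_mul]
  -- integrability of the density
  have hνae : AEMeasurable ν (volume.restrict (Set.Ioo 0 xh)) := by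
    apply aemeasurable_restrict_of_monotoneOn measurableSet_Ioo
    intro a ha b hb hab
    rw [hν a, hν b]
    have hanb : (0:ℝ) ≤ a ^ αm / ε := div_nonneg (Real.rpow_nonneg ha.1.le αm) hε.le
    have h1 : (0:ℝ) ≤ (k / αT) * (a ^ αm / ε) ^ (1 / αT) :=
      mul_nonneg (by positivity) (Real.rpow_nonneg hanb _)
    refine mul_le_mul_of_nonneg_left (W_mono_aux W hW' h1 ?_) (by positivity)
    have h2 : a ^ αm ≤ b ^ αm := Real.rpow_le_rpow ha.1.le hab hαm.le
    have h3 : a ^ αm / ε ≤ b ^ αm / ε := (div_le_div_iff_of_pos_right hε).2 h2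
    exact mul_le_mul_of_nonneg_left
      (Real.rpow_le_rpow hanb h3 (by positivity)) (by positivity)
  have hFnn : ∀ᵐ x ∂(volume.restrict (Set.Ioo 0 xh)),
      0 ≤ fxm x * Real.exp (-(π * lamT * ν x ^ 2)) := by
    rw [ae_restrict_iff' measurableSet_Ioo]
    exact Filter.Eventually.of_forall fun x hx =>
      mul_nonneg (hfnn x hx.1.le) (Real.exp_pos _).le
  have hFmeas : AEStronglyMeasurable (fun x => fxm x * Real.exp (-(π * lamT * ν x ^ 2)))
      (volume.restrict (Set.Ioo 0 xh)) := by
    apply AEMeasurable.aestronglyMeasurable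
    apply AEMeasurable.mul hfxm_meas.aemeasurable
    have hc : Continuous fun r : ℝ => Real.exp (-(π * lamT * r ^ 2)) := by fun_prop
    exact hc.measurable.comp_aemeasurable hνae
  have hFint : IntegrableOn (fun x => fxm x * Real.exp (-(π * lamT * ν x ^ 2)))
      (Set.Ioo 0 xh) volume := by
    apply Integrable.mono'
      (integrable_const (2 * π * lamm * Rm / (1 - Real.exp (-(π * lamm * Rm ^ 2))))) hFmeas
    rw [ae_restrict_iff' measurableSet_Ioo]
    refine Filter.Eventually.of_forall fun x hx => ?_
    have hνx := (hνfact x hx.1).1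
    have h1 : 0 ≤ fxm x * Real.exp (-(π * lamT * ν x ^ 2)) :=
      mul_nonneg (hfnn x hx.1.le) (Real.exp_pos _).le
    rw [Real.norm_eq_abs, abs_of_nonneg h1]
    have h2 : Real.exp (-(π * lamT * ν x ^ 2)) ≤ 1 := by
      rw [Real.exp_le_one_iff]
      have : 0 ≤ π * lamT * ν x ^ 2 := by positivity
      linarith
    have h3 : fxm x ≤ 2 * π * lamm * Rm / (1 - Real.exp (-(π * lamm * Rm ^ 2))) := by
      rw [hf x]
      apply (div_le_div_iff_of_pos_right hD).2
      have hxRm : x ≤ Rm := (hx.2.trans hxhR).le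
      have hexp : Real.exp (-(π * lamm * x ^ 2)) ≤ 1 := by
        rw [Real.exp_le_one_iff]
        have : 0 ≤ π * lamm * x ^ 2 := by positivity
        linarith
      have hA : 2 * π * lamm * x * Real.exp (-(π * lamm * x ^ 2)) ≤ 2 * π * lamm * x * 1 :=
        mul_le_mul_of_nonneg_left hexp (mul_nonneg (by positivity) hx.1.le)
      have hB : 2 * π * lamm * x ≤ 2 * π * lamm * Rm :=
        mul_le_mul_of_nonneg_left hxRm (by positivity)
      linarith
    calc fxm x * Real.exp (-(π * lamT * ν x ^ 2)) ≤ fxm x * 1 :=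
          mul_le_mul_of_nonneg_left h2 (hfnn x hx.1.le)
      _ = fxm x := mul_one _
      _ ≤ _ := h3
  have hlint : ∫⁻ x in Set.Ioo 0 xh,
      ENNReal.ofReal (fxm x * Real.exp (-(π * lamT * ν x ^ 2))) ∂volume
      = ENNReal.ofReal (∫ x in Set.Ioo 0 xh,
          fxm x * Real.exp (-(π * lamT * ν x ^ 2))) :=
    (ofReal_integral_eq_lintegral_ofReal hFint hFnn).symm
  -- assemble
  rw [hEB, hfub, hwd, lintegral_congr_ae haeC,
    lintegral_indicator measurableSet_Ioo _, hlint]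
  have hinteq : ∫ x in Set.Ioo 0 xh, (1 / Am) * fxm x * Real.exp (-(π * lamT * ν x ^ 2))
      = (1 / Am) * ∫ x in Set.Ioo 0 xh, fxm x * Real.exp (-(π * lamT * ν x ^ 2)) := by
    simp_rw [mul_assoc]
    exact integral_const_mul _ _
  rw [hinteq, ENNReal.ofReal_mul (by positivity), one_div,
    ENNReal.ofReal_inv_of_pos hAmpos]
end
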